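/- Let q ≠ 0 and let {v_m : 1 ≤ m ≤ N−1} and {a_{m,n} : 1 ≤ n ≤ m ≤ N−1} be generators of an algebra satisfying: a_{m,n} v_m = q² v_m a_{m,n}; a_{m,n} a_{m,n'} = q² a_{m,n'} a_{m,n} for n > n'; a_{m,n} a_{m−1,n'} = q² a_{m−1,n'} a_{m,n} for n ≤ n'; and all other pairs commute. For N = 3, the matrix Z = T⁺U⁺, where T⁺ = diag(1, v₁, v₂) and U⁺ = (I + a_{1,1}E_{12} + a_{2,1}E_{23})(I + a_{2,2}E_{23}), is a GL_q(3) matrix: every 2×2 minor of Z satisfies the GL_q(2) relations. -/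

import Mathlib

/-- The GL_q(2) relations for a quadruple `(a,b,c,d)` in positions
`(1,1), (1,2), (2,1), (2,2)` of a 2×2 minor. -/
def GLq2Rel {K R : Type*} [CommSemiring K] [Ring R] [Algebra K R]
    (q : K) (a b c d : R) : Prop :=
  a * b = b * a ∧ c * d = d * c ∧ a * c = q ^ 2 • (c * a) ∧
  b * d = q ^ 2 • (d * b) ∧ b * c = q ^ 2 • (c * b) ∧
  a * d - b * c = d * a - c * b

/-- A matrix is a `GL_q(N)` matrix if all its 2×2 minors satisfy the GL_q(2)
relations. -/
def IsGLqMatrix {K R : Type*} [CommSemiring K] [Ring R] [Algebra K R]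
    (q : K) {N : ℕ} (Z : Matrix (Fin N) (Fin N) R) : Prop :=
  ∀ i i' j j' : Fin N, i < i' → j < j' →
    GLq2Rel q (Z i j) (Z i j') (Z i' j) (Z i' j')

/-- q-commutation for a product on the left. -/
lemma qkey_left {K R : Type*} [CommSemiring K] [Ring R] [Algebra K R]
    (s t : K) {a b c : R} (h1 : a * c = s • (c * a)) (h2 : b * c = t • (c * b)) :
    (a * b) * c = (s * t) • (c * (a * b)) := by
  calc (a * b) * c = a * (b * c) := mul_assoc a b c
  _ = a * (t • (c * b)) := by rw [h2]
  _ = t • (a * c * b) := by rw [mul_smul_comm, mul_assoc]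
  _ = t • ((s • (c * a)) * b) := by rw [h1]
  _ = t • (s • (c * a * b)) := by rw [smul_mul_assoc]
  _ = (s * t) • (c * (a * b)) := by rw [smul_smul, mul_comm t s, mul_assoc]

/-- q-commutation for a product on the right. -/
lemma qkey_right {K R : Type*} [CommSemiring K] [Ring R] [Algebra K R]
    (s t : K) {a c d : R} (h1 : a * c = s • (c * a)) (h2 : a * d = t • (d * a)) :
    a * (c * d) = (s * t) • ((c * d) * a) := by
  calc a * (c * d) = (a * c) * d := (mul_assoc a c d).symm
  _ = (s • (c * a)) * d := by rw [h1]
  _ = s • (c * (a * d)) := by rw [smul_mul_assoc, mul_assoc]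
  _ = s • (c * (t • (d * a))) := by rw [h2]
  _ = s • (t • (c * (d * a))) := by rw [mul_smul_comm]
  _ = (s * t) • ((c * d) * a) := by rw [smul_smul, mul_assoc]

/-- For `N = 3`, the product `Z = T⁺U⁺` of the Gauss–Lusztig decomposition,
with `T⁺ = diag(1,v₁,v₂)` and
`U⁺ = (I + a₁₁E₁₂ + a₂₁E₂₃)(I + a₂₂E₂₃)`, is a `GL_q(3)` matrix. -/
theorem stmt10 {K R : Type*} [Field K] [Ring R] [Algebra K R]
    (q : K) (hq : q ≠ 0) (v₁ v₂ a₁₁ a₂₁ a₂₂ : R)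
    (h1 : a₁₁ * v₁ = q ^ 2 • (v₁ * a₁₁))
    (h2 : a₂₁ * v₂ = q ^ 2 • (v₂ * a₂₁))
    (h3 : a₂₂ * v₂ = q ^ 2 • (v₂ * a₂₂))
    (h4 : a₂₂ * a₂₁ = q ^ 2 • (a₂₁ * a₂₂))
    (h5 : a₂₁ * a₁₁ = q ^ 2 • (a₁₁ * a₂₁))
    (h6 : Commute a₂₂ a₁₁)
    (h7 : Commute a₁₁ v₂)
    (h8 : Commute a₂₁ v₁)
    (h9 : Commute a₂₂ v₁)
    (h10 : Commute v₁ v₂) :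
    IsGLqMatrix q
      ((Matrix.of ![![(1 : R), 0, 0], ![0, v₁, 0], ![0, 0, v₂]]) *
        ((1 + Matrix.single 0 1 a₁₁ + Matrix.single 1 2 a₂₁) *
          (1 + Matrix.single 1 2 a₂₂))) := by
  have hM : ((Matrix.of ![![(1 : R), 0, 0], ![0, v₁, 0], ![0, 0, v₂]]) *
        ((1 + Matrix.single 0 1 a₁₁ + Matrix.single 1 2 a₂₁) *
          (1 + Matrix.single 1 2 a₂₂))) =
      Matrix.of ![![(1:R), a₁₁, a₁₁*a₂₂], ![0, v₁, v₁*a₂₁+v₁*a₂₂], ![0,0,v₂]] := by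
    ext i j
    fin_cases i <;> fin_cases j <;>
      simp [Matrix.mul_apply, Fin.sum_univ_three, Matrix.single, Matrix.one_apply,
        mul_add, Matrix.vecHead, Matrix.vecTail]
  rw [hM]
  -- basic q-commutation facts
  have h9' : a₂₂ * v₁ = (1 : K) • (v₁ * a₂₂) := by simpa using h9.eq
  have h8' : a₂₁ * v₁ = (1 : K) • (v₁ * a₂₁) := by simpa using h8.eq
  have h7' : a₁₁ * v₂ = (1 : K) • (v₂ * a₁₁) := by simpa using h7.eq
  have h10' : v₁ * v₂ = (1 : K) • (v₂ * v₁) := by simpa using h10.eq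
  have hbv₁ : (a₁₁ * a₂₂) * v₁ = q ^ 2 • (v₁ * (a₁₁ * a₂₂)) := by
    have := qkey_left (q ^ 2) 1 h1 h9'
    simpa using this
  have hbv₂ : (a₁₁ * a₂₂) * v₂ = q ^ 2 • (v₂ * (a₁₁ * a₂₂)) := by
    have := qkey_left 1 (q ^ 2) h7' h3
    simpa using this
  have hba₂₂ : (a₁₁ * a₂₂) * a₂₂ = (1 : K) • (a₂₂ * (a₁₁ * a₂₂)) := by
    simpa using (h6.symm.mul_left (Commute.refl a₂₂)).eq
  have hba₂₁ : (a₁₁ * a₂₂) * a₂₁ = (1 : K) • (a₂₁ * (a₁₁ * a₂₂)) := by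
    have L : (a₁₁ * a₂₂) * a₂₁ = q ^ 2 • (a₁₁ * (a₂₁ * a₂₂)) := by
      rw [mul_assoc, h4, mul_smul_comm]
    have Rr : a₂₁ * (a₁₁ * a₂₂) = q ^ 2 • (a₁₁ * (a₂₁ * a₂₂)) := by
      rw [← mul_assoc, h5, smul_mul_assoc, mul_assoc]
    rw [L, Rr, one_smul]
  have e1 : (a₁₁ * a₂₂) * (v₁ * a₂₁) = q ^ 2 • ((v₁ * a₂₁) * (a₁₁ * a₂₂)) := by
    have := qkey_right (q ^ 2) 1 hbv₁ hba₂₁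
    simpa using this
  have e2 : (a₁₁ * a₂₂) * (v₁ * a₂₂) = q ^ 2 • ((v₁ * a₂₂) * (a₁₁ * a₂₂)) := by
    have := qkey_right (q ^ 2) 1 hbv₁ hba₂₂
    simpa using this
  have hbw : (a₁₁ * a₂₂) * (v₁ * a₂₁ + v₁ * a₂₂) =
      q ^ 2 • ((v₁ * a₂₁ + v₁ * a₂₂) * (a₁₁ * a₂₂)) := by
    rw [mul_add, e1, e2, add_mul, smul_add]
  have hwv₂ : (v₁ * a₂₁ + v₁ * a₂₂) * v₂ = q ^ 2 • (v₂ * (v₁ * a₂₁ + v₁ * a₂₂)) := by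
    have t1 : (v₁ * a₂₁) * v₂ = q ^ 2 • (v₂ * (v₁ * a₂₁)) := by
      have := qkey_left 1 (q ^ 2) h10' h2
      simpa using this
    have t2 : (v₁ * a₂₂) * v₂ = q ^ 2 • (v₂ * (v₁ * a₂₂)) := by
      have := qkey_left 1 (q ^ 2) h10' h3
      simpa using this
    rw [add_mul, t1, t2, mul_add, smul_add]
  have hab : a₁₁ * (a₁₁ * a₂₂) = (a₁₁ * a₂₂) * a₁₁ :=
    ((Commute.refl a₁₁).mul_right h6.symm).eq
  have hv₁w : v₁ * (v₁ * a₂₁ + v₁ * a₂₂) = (v₁ * a₂₁ + v₁ * a₂₂) * v₁ :=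
    (Commute.add_right ((Commute.refl v₁).mul_right h8.symm)
      ((Commute.refl v₁).mul_right h9.symm)).eq
  have hdet : a₁₁ * (v₁ * a₂₁ + v₁ * a₂₂) - (a₁₁ * a₂₂) * v₁ =
      (v₁ * a₂₁ + v₁ * a₂₂) * a₁₁ - v₁ * (a₁₁ * a₂₂) := by
    have L : a₁₁ * (v₁ * a₂₁ + v₁ * a₂₂) - (a₁₁ * a₂₂) * v₁ =
        q ^ 2 • (v₁ * (a₁₁ * a₂₁)) := by
      have t : (a₁₁ * a₂₂) * v₁ = a₁₁ * (v₁ * a₂₂) := by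
        rw [mul_assoc, h9.eq]
      rw [mul_add, t, add_sub_cancel_right, ← mul_assoc, h1, smul_mul_assoc, mul_assoc]
    have Rr : (v₁ * a₂₁ + v₁ * a₂₂) * a₁₁ - v₁ * (a₁₁ * a₂₂) =
        q ^ 2 • (v₁ * (a₁₁ * a₂₁)) := by
      have t : (v₁ * a₂₂) * a₁₁ = v₁ * (a₁₁ * a₂₂) := by
        rw [mul_assoc, h6.eq]
      rw [add_mul, t, add_sub_cancel_right, mul_assoc, h5, mul_smul_comm]
    rw [L, Rr]
  have M1 : GLq2Rel q 1 a₁₁ 0 v₁ := ⟨by simp, by simp, by simp, h1, by simp, by simp⟩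
  have M2 : GLq2Rel q 1 (a₁₁*a₂₂) 0 (v₁*a₂₁+v₁*a₂₂) :=
    ⟨by simp, by simp, by simp, hbw, by simp, by simp⟩
  have M3 : GLq2Rel q a₁₁ (a₁₁*a₂₂) v₁ (v₁*a₂₁+v₁*a₂₂) :=
    ⟨hab, hv₁w, h1, hbw, hbv₁, hdet⟩
  have M4 : GLq2Rel q 1 a₁₁ 0 0 := ⟨by simp, by simp, by simp, by simp, by simp, by simp⟩
  have M5 : GLq2Rel q 1 (a₁₁*a₂₂) 0 v₂ :=
    ⟨by simp, by simp, by simp, hbv₂, by simp, by simp⟩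
  have M6 : GLq2Rel q a₁₁ (a₁₁*a₂₂) 0 v₂ :=
    ⟨hab, by simp, by simp, hbv₂, by simp, by simp [h7.eq]⟩
  have M7 : GLq2Rel q 0 v₁ 0 0 := ⟨by simp, by simp, by simp, by simp, by simp, by simp⟩
  have M8 : GLq2Rel q 0 (v₁*a₂₁+v₁*a₂₂) 0 v₂ :=
    ⟨by simp, by simp, by simp, hwv₂, by simp, by simp⟩
  have M9 : GLq2Rel q v₁ (v₁*a₂₁+v₁*a₂₂) 0 v₂ :=
    ⟨hv₁w, by simp, by simp, hwv₂, by simp, by simp [h10.eq]⟩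
  intro i i' j j' hi hj
  fin_cases i <;> fin_cases i' <;> fin_cases j <;> fin_cases j' <;>
    first
      | exact absurd hi (by decide)
      | exact absurd hj (by decide)
      | skip
  · exact M1
  · exact M2
  · exact M3
  · exact M4
  · exact M5
  · exact M6
  · exact M7
  · exact M8
  · exact M9
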